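/- Let G ≤ Sym(Ω) and Fixed be a fixed-point approximator. For each i ∈ ℕ₀ let V_i be a labelled digraph stack and F_i a list of points of Ω such that the stabiliser {g ∈ G : F_i^g = F_i (pointwise)} is contained in Aut(V_i). Define f(S) to be the empty stack if no a ∈ G maps F_{|S|} pointwise to Fixed(S), and V_{|S|}^a otherwise (for any such a). Then f is well-defined and (f, f) is a refiner for G. -/
import Mathlib


attribute [local instance] Classical.propDecidable

/-- A (vertex- and arc-)labelled digraph on vertex set `Ω` with labels in `L`.
The arcs are the pairs on which `alabel` is not `none`. -/
structure LDigraph (Ω : Type*) (L : Type*) where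
  vlabel : Ω → L
  alabel : Ω × Ω → Option L

namespace LDigraph

variable {Ω L : Type*}

/-- The action of `Sym(Ω)` on labelled digraphs: `Γ.act g` is `Γ^g`. -/
def act (Γ : LDigraph Ω L) (g : Equiv.Perm Ω) : LDigraph Ω L where
  vlabel := fun δ => Γ.vlabel (g⁻¹ δ)
  alabel := fun p => Γ.alabel (g⁻¹ p.1, g⁻¹ p.2)

/-- The set of arcs of a labelled digraph. -/
def arcs (Γ : LDigraph Ω L) : Set (Ω × Ω) := {p | Γ.alabel p ≠ none}

/-- The set of permutations inducing an isomorphism from `Γ` to `Δ`. -/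
def Iso (Γ Δ : LDigraph Ω L) : Set (Equiv.Perm Ω) := {g | Γ.act g = Δ}

end LDigraph

/-- A labelled digraph stack on `Ω`: a finite list of labelled digraphs on `Ω`. -/
abbrev Stack (Ω L : Type*) := List (LDigraph Ω L)

namespace Stack

variable {Ω L : Type*}

/-- Entrywise action of `Sym(Ω)` on labelled digraph stacks. -/
def act (S : Stack Ω L) (g : Equiv.Perm Ω) : Stack Ω L := S.map (fun Γ => Γ.act g)

/-- The set of permutations inducing an isomorphism from the stack `S` to the stack `T`. -/
def Iso (S T : Stack Ω L) : Set (Equiv.Perm Ω) := {g | Stack.act S g = T}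

/-- The squashed labelled digraph of a stack: arcs are the union of the arcs;
a vertex label is the list of the vertex labels; an arc label is the list of
the arc labels, with `none` (the symbol `#`) for missing arcs. -/
noncomputable def squash (S : Stack Ω L) : LDigraph Ω (List (Option L)) where
  vlabel := fun δ => S.map (fun Γ => some (Γ.vlabel δ))
  alabel := fun p =>
    if ∀ Γ ∈ S, Γ.alabel p = none then none
    else some (S.map (fun Γ => Γ.alabel p))

end Stack

/-- `(fL, fR)` is a refiner for `U ⊆ Sym(Ω)`:
for all isomorphic stacks `S`, `T`, `U ∩ Iso(S,T) ⊆ U ∩ Iso(fL S, fR T)`. -/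
def IsRefiner {Ω L : Type*} (U : Set (Equiv.Perm Ω))
    (fL fR : Stack Ω L → Stack Ω L) : Prop :=
  ∀ S T : Stack Ω L, (Stack.Iso S T).Nonempty →
    U ∩ Stack.Iso S T ⊆ U ∩ Stack.Iso (fL S) (fR T)

/-- The refining function of Lemma `lem-fixed-stack`: `f(S)` is the empty stack if
no `a ∈ G` maps `F_{|S|}` pointwise to `Fixed(S)`, and `(V_{|S|})^a` for such
an `a` otherwise. -/
noncomputable def fixedStackRefine {Ω L : Type*} (G : Subgroup (Equiv.Perm Ω))
    (Fixed : Stack Ω L → List Ω) (V : ℕ → Stack Ω L) (F : ℕ → List Ω)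
    (S : Stack Ω L) : Stack Ω L :=
  if hex : ∃ a : Equiv.Perm Ω, a ∈ G ∧ (F S.length).map ⇑a = Fixed S
  then Stack.act (V S.length) hex.choose
  else ([] : Stack Ω L)


lemma ldigraph_act_act {Ω L : Type*} (Γ : LDigraph Ω L) (g h : Equiv.Perm Ω) :
    (Γ.act g).act h = Γ.act (h * g) := by
  unfold LDigraph.act
  congr 1 <;> funext p <;> simp [mul_inv_rev, Equiv.Perm.mul_apply]

lemma stack_act_act {Ω L : Type*} (S : Stack Ω L) (g h : Equiv.Perm Ω) :
    Stack.act (Stack.act S g) h = Stack.act S (h * g) := by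
  simp [Stack.act, List.map_map, Function.comp, ldigraph_act_act]

/-- Let `G ≤ Sym(Ω)` and let `Fixed` be a fixed-point approximator.  Given, for each
`i ∈ ℕ₀`, a labelled digraph stack `V i` and a list `F i` of points such that the
pointwise stabiliser of `F i` in `G` is contained in `Aut(V i)`, the function `f`
defined above is well-defined (independent of the choice of `a`), and `(f, f)` is a
refiner for `G`. -/
theorem stmt17 {Ω L : Type*} [Finite Ω] (G : Subgroup (Equiv.Perm Ω))
    (Fixed : Stack Ω L → List Ω)
    (hFix1 : ∀ S : Stack Ω L, ∀ ω ∈ Fixed S, ∀ a ∈ Stack.Iso S S, a ω = ω)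
    (hFix2 : ∀ (S : Stack Ω L) (g : Equiv.Perm Ω),
      (Fixed S).map ⇑g = Fixed (Stack.act S g))
    (V : ℕ → Stack Ω L) (F : ℕ → List Ω)
    (hVF : ∀ i : ℕ, ∀ g ∈ G, (F i).map ⇑g = F i → g ∈ Stack.Iso (V i) (V i)) :
    (∀ S : Stack Ω L, ∀ a b : Equiv.Perm Ω, a ∈ G → b ∈ G →
      (F S.length).map ⇑a = Fixed S → (F S.length).map ⇑b = Fixed S →
      Stack.act (V S.length) a = Stack.act (V S.length) b) ∧
    IsRefiner (G : Set (Equiv.Perm Ω))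
      (fixedStackRefine G Fixed V F) (fixedStackRefine G Fixed V F) := by
  have key : ∀ (n : ℕ) (Sfix : List Ω) (a b : Equiv.Perm Ω), a ∈ G → b ∈ G →
      (F n).map ⇑a = Sfix → (F n).map ⇑b = Sfix →
      Stack.act (V n) a = Stack.act (V n) b := by
    intro n Sfix a b ha hb hfa hfb
    have hmap : (F n).map ⇑(b⁻¹ * a) = F n := by
      rw [Equiv.Perm.coe_mul, ← List.map_map, hfa, ← hfb, List.map_map]
      have hbi : ⇑b⁻¹ ∘ ⇑b = id := by ext x; simp
      rw [hbi, List.map_id]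
    have hiso : Stack.act (V n) (b⁻¹ * a) = V n :=
      hVF n (b⁻¹ * a) (mul_mem (inv_mem hb) ha) hmap
    have h2 : Stack.act (Stack.act (V n) (b⁻¹ * a)) b = Stack.act (V n) b := by
      rw [hiso]
    rwa [stack_act_act, mul_inv_cancel_left] at h2
  refine ⟨fun S a b ha hb hfa hfb => key S.length (Fixed S) a b ha hb hfa hfb, ?_⟩
  rintro S T - g ⟨hgG, hgIso⟩
  have hgIso' : Stack.act S g = T := hgIso
  refine ⟨hgG, ?_⟩
  have hlen : T.length = S.length := by rw [← hgIso']; simp [Stack.act]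
  have hFixT : (Fixed S).map ⇑g = Fixed T := by rw [hFix2 S g, hgIso']
  show Stack.act (fixedStackRefine G Fixed V F S) g = fixedStackRefine G Fixed V F T
  by_cases hS : ∃ a : Equiv.Perm Ω, a ∈ G ∧ (F S.length).map ⇑a = Fixed S
  · obtain ⟨haG, hfa⟩ := hS.choose_spec
    have hT : ∃ a : Equiv.Perm Ω, a ∈ G ∧ (F T.length).map ⇑a = Fixed T :=
      ⟨g * hS.choose, mul_mem hgG haG, by
        rw [hlen, Equiv.Perm.coe_mul, ← List.map_map, hfa, hFixT]⟩
    obtain ⟨hcG, hfc⟩ := hT.choose_spec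
    have hV : V S.length = V T.length := by rw [hlen]
    simp only [fixedStackRefine, dif_pos hS, dif_pos hT]
    rw [stack_act_act, hV]
    exact key T.length (Fixed T) (g * hS.choose) hT.choose (mul_mem hgG haG) hcG
      (by rw [hlen, Equiv.Perm.coe_mul, ← List.map_map, hfa, hFixT]) hfc
  · have hT : ¬ ∃ a : Equiv.Perm Ω, a ∈ G ∧ (F T.length).map ⇑a = Fixed T := by
      rintro ⟨c, hcG, hc⟩
      refine hS ⟨g⁻¹ * c, mul_mem (inv_mem hgG) hcG, ?_⟩
      rw [Equiv.Perm.coe_mul, ← List.map_map, ← hlen, hc, ← hFixT, List.map_map]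
      have hgi : ⇑g⁻¹ ∘ ⇑g = id := by ext x; simp
      rw [hgi, List.map_id]
    simp only [fixedStackRefine, dif_neg hS, dif_neg hT]
    rfl
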